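/- Let A be a finite group with a central subgroup Z and a normal subgroup H such that |A| = |Z|·|H|. Let p be a prime dividing |Z| but not |Z(H)|, let P be the Sylow p-subgroup of Z, and let D be a cyclic p-subgroup of A containing P. Then D = P. -/

import Mathlib

open scoped Pointwise

theorem stmt11 (A : Type*) [Group A] [Finite A] (p : ℕ) (hp : p.Prime)
    (Z H : Subgroup A) (hZ : Z ≤ Subgroup.center A) [H.Normal]
    (hcard : Nat.card A = Nat.card Z * Nat.card H)
    (hpZ : p ∣ Nat.card Z)
    (hpZH : ¬ p ∣ Nat.card ↥(H ⊓ Subgroup.centralizer (H : Set A)))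
    (P : Subgroup A) (hPZ : P ≤ Z) (hPp : IsPGroup p P)
    (hPmax : ∀ Q : Subgroup A, Q ≤ Z → IsPGroup p Q → Q ≤ P)
    (D : Subgroup A) (hDp : IsPGroup p D) (hDcyc : IsCyclic D) (hPD : P ≤ D) :
    D = P := by
  classical
  have hpfact : Fact p.Prime := ⟨hp⟩
  -- Z ⊓ H ≤ Z(H)
  have hZH_le : Z ⊓ H ≤ H ⊓ Subgroup.centralizer (H : Set A) := by
    rintro x hx
    rw [Subgroup.mem_inf] at hx ⊢
    refine ⟨hx.2, Subgroup.mem_centralizer_iff.mpr fun g _ => ?_⟩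
    exact Subgroup.mem_center_iff.mp (hZ hx.1) g
  set k := Nat.card ↥(Z ⊓ H) with hk
  have hkp : ¬ p ∣ k := fun h => hpZH (h.trans (Subgroup.card_dvd_of_le hZH_le))
  set N := Z ⊔ H with hN
  haveI hZnormal : Z.Normal :=
    ⟨fun n hn g => by
      rw [Subgroup.mem_center_iff.mp (hZ hn) g, mul_inv_cancel_right]; exact hn⟩
  -- index of N equals k
  have h4 : k * H.relIndex Z = Nat.card ↥Z := by
    have e1 : Nat.card ↥(H.subgroupOf Z) = k := by
      rw [← Subgroup.inf_subgroupOf_right, hk, inf_comm]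
      exact Nat.card_congr (Subgroup.subgroupOfEquivOfLe (inf_le_left : Z ⊓ H ≤ Z)).toEquiv
    have h5 := Subgroup.card_mul_index (H.subgroupOf Z)
    rwa [e1] at h5
  have hrpos : 0 < H.relIndex Z := by
    rcases Nat.eq_zero_or_pos (H.relIndex Z) with h0 | h0
    · rw [h0, mul_zero] at h4
      exact absurd h4.symm (Nat.card_pos (α := ↥Z)).ne'
    · exact h0
  have hNindex : N.index = k := by
    have h1 : Nat.card ↥H * H.index = Nat.card A := Subgroup.card_mul_index H
    have hHindex : H.index = Nat.card ↥Z := by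
      rw [hcard, mul_comm (Nat.card ↥Z) _] at h1
      exact Nat.eq_of_mul_eq_mul_left Nat.card_pos h1
    have h2 : H.relIndex N * N.index = H.index :=
      Subgroup.relIndex_mul_index le_sup_right
    have h3 : H.relIndex N = H.relIndex Z := Subgroup.relIndex_sup_right Z H
    have h6 : H.relIndex Z * N.index = H.relIndex Z * k := by
      rw [h3] at h2
      rw [h2, hHindex, ← h4, mul_comm]
    exact Nat.eq_of_mul_eq_mul_left hrpos h6
  have hpN : ¬ p ∣ N.index := hNindex ▸ hkp
  -- now show D ≤ P
  refine le_antisymm (fun d hd => ?_) hPD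
  obtain ⟨n, hdn0⟩ := hDp ⟨d, hd⟩
  have hdn : d ^ (p ^ n) = 1 := by exact_mod_cast congrArg (Subgroup.subtype D) hdn0
  -- d ∈ N
  have hdN : d ∈ N := by
    rw [← QuotientGroup.ker_mk' N, MonoidHom.mem_ker, ← orderOf_eq_one_iff]
    have o1 : orderOf (QuotientGroup.mk' N d) ∣ p ^ n :=
      (orderOf_map_dvd (QuotientGroup.mk' N) d).trans (orderOf_dvd_of_pow_eq_one hdn)
    have o2 : orderOf (QuotientGroup.mk' N d) ∣ N.index := by
      rw [Subgroup.index_eq_card]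
      exact orderOf_dvd_natCard _
    have hcop : Nat.Coprime (p ^ n) N.index :=
      Nat.Coprime.pow_left n ((Nat.Prime.coprime_iff_not_dvd hp).mpr hpN)
    exact Nat.eq_one_of_dvd_coprimes hcop o1 o2
  -- write d = z * h
  have hdmem : d ∈ (Z : Set A) * (H : Set A) := by
    rw [← Subgroup.mul_normal]
    exact hdN
  obtain ⟨z, hz, h, hh, rfl⟩ := hdmem
  show z * h ∈ P
  have hcomm : Commute z h := (Subgroup.mem_center_iff.mp (hZ hz) h).symm
  have hzh : z ^ (p ^ n) * h ^ (p ^ n) = 1 := by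
    rw [← Commute.mul_pow hcomm, hdn]
  -- z^(p^n) ∈ Z ⊓ H, so (z^k)^(p^n) = 1
  have hw : z ^ (p ^ n) ∈ Z ⊓ H := by
    rw [Subgroup.mem_inf]
    refine ⟨pow_mem hz _, ?_⟩
    have e : z ^ (p ^ n) = (h ^ (p ^ n))⁻¹ := by
      rw [eq_inv_iff_mul_eq_one]; exact hzh
    rw [e]; exact inv_mem (pow_mem hh _)
  have hzk : (z ^ k) ^ (p ^ n) = 1 := by
    have e : (⟨z ^ (p ^ n), hw⟩ : ↥(Z ⊓ H)) ^ k = 1 := pow_card_eq_one'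
    have hc : (z ^ (p ^ n)) ^ k = 1 := by
      exact_mod_cast congrArg (Subgroup.subtype _) e
    rw [← pow_mul, mul_comm, pow_mul] at hc
    exact hc
  -- z^k ∈ P
  have hzkP : z ^ k ∈ P := by
    obtain ⟨m, _, hm⟩ := (Nat.dvd_prime_pow hp).mp (orderOf_dvd_of_pow_eq_one hzk)
    have hpg : IsPGroup p (Subgroup.zpowers (z ^ k)) :=
      IsPGroup.of_card (by rw [Nat.card_zpowers, hm])
    exact hPmax _ (Subgroup.zpowers_le.mpr (pow_mem hz k)) hpg (Subgroup.mem_zpowers _)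
  have hdk : (z * h) ^ k = z ^ k * h ^ k := Commute.mul_pow hcomm k
  have hyD : h ^ k ∈ D := by
    have e : h ^ k = (z ^ k)⁻¹ * (z * h) ^ k := by rw [hdk, inv_mul_cancel_left]
    rw [e]
    exact mul_mem (inv_mem (hPD hzkP)) (pow_mem hd k)
  by_cases hy1 : h ^ k = 1
  · -- d^k = z^k ∈ P, and k coprime to orderOf d, so d ∈ P
    have hdkP : (z * h) ^ k ∈ P := by rw [hdk, hy1, mul_one]; exact hzkP
    have hordd : orderOf (z * h) ∣ p ^ n := orderOf_dvd_of_pow_eq_one hdn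
    rcases Nat.lt_or_ge 1 (orderOf (z * h)) with h1 | h1
    · have hcop : Nat.Coprime k (orderOf (z * h)) := by
        obtain ⟨m, _, hm⟩ := (Nat.dvd_prime_pow hp).mp hordd
        rw [hm]
        exact Nat.Coprime.pow_right m
          (Nat.Coprime.symm ((Nat.Prime.coprime_iff_not_dvd hp).mpr hkp))
      obtain ⟨m, -, hm⟩ := Nat.exists_mul_mod_eq_one_of_coprime hcop h1
      have e : (z * h) ^ (k * m) = z * h := by
        rw [← pow_mod_orderOf, hm, pow_one]
      rw [← e, pow_mul]
      exact pow_mem hdkP m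
    · have horder : orderOf (z * h) = 1 := by
        have := orderOf_pos (z * h)
        omega
      rw [orderOf_eq_one_iff.mp horder]
      exact P.one_mem
  · -- h^k ≠ 1 leads to contradiction with p ∤ |Z(H)|
    exfalso
    obtain ⟨r, hr⟩ := IsPGroup.iff_orderOf.mp hDp ⟨h ^ k, hyD⟩
    have hrA : orderOf (h ^ k) = p ^ r := by
      rw [← Subgroup.orderOf_coe (⟨h ^ k, hyD⟩ : ↥D)] at hr
      exact hr
    have hr1 : 1 ≤ r := by
      by_contra h0
      have : r = 0 := by omega
      apply hy1
      rw [← orderOf_eq_one_iff, hrA, this, pow_zero]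
    -- element t of order p in D ∩ H
    set t := (h ^ k) ^ (p ^ (r - 1)) with ht
    have htD : t ∈ D := pow_mem hyD _
    have htH : t ∈ H := pow_mem (pow_mem hh k) _
    have htp : t ^ p = 1 := by
      rw [ht, ← pow_mul, ← pow_succ, Nat.sub_add_cancel hr1, ← hrA, pow_orderOf_eq_one]
    have htne : t ≠ 1 := by
      intro e
      have hdvd := orderOf_dvd_of_pow_eq_one (ht ▸ e)
      rw [hrA] at hdvd
      have h5 := Nat.le_of_dvd (pow_pos hp.pos _) hdvd
      have h6 : p ^ (r - 1) < p ^ r :=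
        Nat.pow_lt_pow_right hp.one_lt (by omega)
      omega
    have hot : orderOf t = p := by
      rcases (Nat.dvd_prime hp).mp (orderOf_dvd_of_pow_eq_one htp) with h1 | h1
      · exact absurd (orderOf_eq_one_iff.mp h1) htne
      · exact h1
    -- element of order p in P
    obtain ⟨g, hg⟩ := exists_prime_orderOf_dvd_card' (G := ↥Z) p hpZ
    have hgA : orderOf (g : A) = p := by rw [Subgroup.orderOf_coe, hg]
    have huP : (g : A) ∈ P := by
      have hpg : IsPGroup p (Subgroup.zpowers (g : A)) :=
        IsPGroup.of_card (by rw [Nat.card_zpowers, hgA, pow_one])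
      exact hPmax _ (Subgroup.zpowers_le.mpr g.2) hpg (Subgroup.mem_zpowers _)
    -- uniqueness of order-p subgroup in cyclic D
    haveI : Fintype ↥D := Fintype.ofFinite _
    set t' : ↥D := ⟨t, htD⟩ with ht'
    set u' : ↥D := ⟨(g : A), hPD huP⟩ with hu'
    have hot' : orderOf t' = p := by rw [← Subgroup.orderOf_coe t']; exact hot
    have hou' : orderOf u' = p := by rw [← Subgroup.orderOf_coe u']; exact hgA
    have hcardle : (Finset.filter (fun a : ↥D => a ^ p = 1) Finset.univ).card ≤ p := IsCyclic.card_pow_eq_one_le hp.pos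
    set T : Finset ↥D := (Subgroup.zpowers t' : Set ↥D).toFinset with hT
    have hTsub : T ⊆ Finset.filter (fun a : ↥D => a ^ p = 1) Finset.univ := by
      intro x hx
      rw [hT, Set.mem_toFinset, SetLike.mem_coe, Subgroup.mem_zpowers_iff] at hx
      obtain ⟨j, rfl⟩ := hx
      simp only [Finset.mem_filter, Finset.mem_univ, true_and, Set.mem_setOf_eq,
        Finset.mem_coe]
      have : (t' ^ j) ^ p = (t' ^ p) ^ j := by
        rw [← zpow_natCast, ← zpow_mul, mul_comm, zpow_mul, zpow_natCast]
      rw [this, ← hot', pow_orderOf_eq_one, one_zpow]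
    have hTcard : T.card = p := by
      rw [hT, Set.toFinset_card]
      rw [← Nat.card_eq_fintype_card]
      rw [← hot']
      exact Nat.card_zpowers t'
    have hTeq : T = Finset.filter (fun a : ↥D => a ^ p = 1) Finset.univ := by
      apply Finset.eq_of_subset_of_card_le hTsub
      rw [hTcard]
      exact hcardle
    have hu'T : u' ∈ T := by
      rw [hTeq]
      simp only [Finset.mem_filter, Finset.mem_univ, true_and, Set.mem_setOf_eq]
      rw [← hou', pow_orderOf_eq_one]
    rw [hT, Set.mem_toFinset, SetLike.mem_coe, Subgroup.mem_zpowers_iff] at hu'T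
    obtain ⟨j, hj⟩ := hu'T
    have hgH : (g : A) ∈ H := by
      have : (t : A) ^ j = (g : A) := by
        have := congrArg (Subgroup.subtype D) hj
        simpa using this
      rw [← this]
      exact Subgroup.zpow_mem H htH j
    -- contradiction
    have hgZH : (g : A) ∈ H ⊓ Subgroup.centralizer (H : Set A) := hZH_le ⟨g.2, hgH⟩
    apply hpZH
    have := orderOf_dvd_natCard (⟨(g : A), hgZH⟩ : ↥(H ⊓ Subgroup.centralizer (H : Set A)))
    rwa [Subgroup.orderOf_mk, hgA] at this
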